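/- Let n > k ≥ 2 be integers, s > 0, and j ≥ 1 an integer. Then ∫_{2πj}^{2π(j+1)} e^{−s x²/2} · (sin x / x) · 1/(2(n−k)(1 − cos x) + k²) dx > 0. -/

import Mathlib

open MeasureTheory Real Filter Topology

/-- positivity of the integral over one period `[2πj, 2π(j+1)]`. -/
theorem period_integral_pos
    (n k : ℕ) (hk : 2 ≤ k) (hkn : k < n) (s : ℝ) (hs : 0 < s) (j : ℕ) (hj : 1 ≤ j) :
    0 <
      ∫ x in Set.Icc (2 * π * j) (2 * π * (j + 1)),
        Real.exp (-s * x ^ 2 / 2) * (Real.sin x / x) *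
          (1 / (2 * ((n : ℝ) - k) * (1 - Real.cos x) + k ^ 2)) := by
  have hπ := Real.pi_pos
  have hj1 : (1 : ℝ) ≤ (j : ℝ) := by exact_mod_cast hj
  have hkn' : (k : ℝ) ≤ (n : ℝ) := by exact_mod_cast hkn.le
  have hk2 : (2 : ℝ) ≤ (k : ℝ) := by exact_mod_cast hk
  set f : ℝ → ℝ := fun x => Real.exp (-s * x ^ 2 / 2) * (Real.sin x / x) *
      (1 / (2 * ((n : ℝ) - k) * (1 - Real.cos x) + k ^ 2)) with hf
  set a : ℝ := 2 * π * j with ha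
  have ha0 : 0 < a := by nlinarith
  -- denominator positivity
  have hD : ∀ x : ℝ, 0 < 2 * ((n : ℝ) - k) * (1 - Real.cos x) + (k : ℝ) ^ 2 := by
    intro x
    have h1 : 0 ≤ ((n : ℝ) - k) * (1 - Real.cos x) :=
      mul_nonneg (by linarith) (by nlinarith [Real.cos_le_one x])
    nlinarith
  -- continuity of f on positive reals
  have hcont : ContinuousOn f {x : ℝ | 0 < x} := by
    apply ContinuousOn.mul
    · apply ContinuousOn.mul
      · exact (Real.continuous_exp.comp (by continuity)).continuousOn
      · exact Real.continuous_sin.continuousOn.div continuousOn_id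
          (fun x hx => ne_of_gt hx)
    · have hc : Continuous fun x : ℝ => 2 * ((n : ℝ) - k) * (1 - Real.cos x) + (k : ℝ) ^ 2 := by
        continuity
      exact continuousOn_const.div hc.continuousOn (fun x _ => (hD x).ne')
  have hint1 : IntervalIntegrable f volume a (a + π) := by
    apply (hcont.mono ?_).intervalIntegrable
    intro x hx
    rw [Set.uIcc_of_le (by linarith)] at hx
    exact lt_of_lt_of_le ha0 hx.1
  have hint2 : IntervalIntegrable f volume (a + π) (a + 2 * π) := by
    apply (hcont.mono ?_).intervalIntegrable
    intro x hx
    rw [Set.uIcc_of_le (by linarith)] at hx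
    have : a + π ≤ x := hx.1
    simp only [Set.mem_setOf_eq]; linarith
  have hint3 : IntervalIntegrable (fun x => f (2 * a + 2 * π - x)) volume a (a + π) := by
    apply ContinuousOn.intervalIntegrable
    apply hcont.comp (continuous_const.sub continuous_id).continuousOn
    intro x hx
    rw [Set.uIcc_of_le (by linarith)] at hx
    have : x ≤ a + π := hx.2
    simp only [Set.mem_setOf_eq, id_eq, Pi.sub_apply]; linarith
  -- rewrite the set integral as an interval integral
  have hb : 2 * π * ((j : ℝ) + 1) = a + 2 * π := by rw [ha]; ring
  have h1 : (∫ x in Set.Icc a (a + 2 * π), f x) = ∫ x in a..(a + 2 * π), f x := by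
    rw [intervalIntegral.integral_of_le (by linarith),
      MeasureTheory.integral_Icc_eq_integral_Ioc]
  have hsplit : (∫ x in a..(a + 2 * π), f x)
      = (∫ x in a..(a + π), f x) + ∫ x in (a + π)..(a + 2 * π), f x :=
    (intervalIntegral.integral_add_adjacent_intervals hint1 hint2).symm
  have hsub : (∫ x in (a + π)..(a + 2 * π), f x)
      = ∫ x in a..(a + π), f (2 * a + 2 * π - x) := by
    rw [intervalIntegral.integral_comp_sub_left f (2 * a + 2 * π),
      show 2 * a + 2 * π - (a + π) = a + π from by ring,
      show 2 * a + 2 * π - a = a + 2 * π from by ring]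
  have hcomb : (∫ x in a..(a + π), f x) + (∫ x in a..(a + π), f (2 * a + 2 * π - x))
      = ∫ x in a..(a + π), (f x + f (2 * a + 2 * π - x)) :=
    (intervalIntegral.integral_add hint1 hint3).symm
  rw [hb, h1, hsplit, hsub, hcomb]
  apply intervalIntegral.intervalIntegral_pos_of_pos_on (hint1.add hint3)
    ?_ (by linarith)
  intro x hx
  obtain ⟨hx1, hx2⟩ := hx
  have hx0 : 0 < x := lt_trans ha0 hx1
  set y : ℝ := 2 * a + 2 * π - x with hy
  have hxy : x < y := by rw [hy, ha]; linarith
  have hy0 : 0 < y := lt_trans hx0 hxy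
  clear_value y
  -- trigonometric identities
  have hsinx : 0 < Real.sin x := by
    have : Real.sin x = Real.sin (x - (j : ℤ) * (2 * π)) := by
      rw [Real.sin_sub_int_mul_two_pi]
    rw [this]
    apply Real.sin_pos_of_pos_of_lt_pi
    · push_cast; rw [ha] at hx1; linarith
    · push_cast; rw [ha] at hx2; linarith
  have hyeq : y = -x + ((2 * (j : ℤ) + 1) : ℤ) * (2 * π) := by
    rw [hy, ha]; push_cast; ring
  have hsiny : Real.sin y = -Real.sin x := by
    rw [hyeq, Real.sin_add_int_mul_two_pi, Real.sin_neg]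
  have hcosy : Real.cos y = Real.cos x := by
    rw [hyeq, Real.cos_add_int_mul_two_pi, Real.cos_neg]
  -- main estimate
  have hE : Real.exp (-s * y ^ 2 / 2) < Real.exp (-s * x ^ 2 / 2) := by
    apply Real.exp_lt_exp.2
    have hx2y : x ^ 2 < y ^ 2 := by nlinarith
    have := mul_lt_mul_of_pos_left hx2y hs
    linarith
  have hEdiv : Real.exp (-s * y ^ 2 / 2) / y < Real.exp (-s * x ^ 2 / 2) / x := by
    rw [div_lt_div_iff₀ hy0 hx0]
    calc Real.exp (-s * y ^ 2 / 2) * x < Real.exp (-s * x ^ 2 / 2) * x :=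
          mul_lt_mul_of_pos_right hE hx0
      _ < Real.exp (-s * x ^ 2 / 2) * y :=
          mul_lt_mul_of_pos_left hxy (Real.exp_pos _)
  have hDx := hD x
  simp only [hf, hsiny, hcosy]
  have hEq : Real.exp (-s * x ^ 2 / 2) * (Real.sin x / x) *
        (1 / (2 * ((n : ℝ) - k) * (1 - Real.cos x) + (k : ℝ) ^ 2)) +
      Real.exp (-s * y ^ 2 / 2) * (-Real.sin x / y) *
        (1 / (2 * ((n : ℝ) - k) * (1 - Real.cos x) + (k : ℝ) ^ 2))
      = Real.sin x * (1 / (2 * ((n : ℝ) - k) * (1 - Real.cos x) + (k : ℝ) ^ 2)) *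
        (Real.exp (-s * x ^ 2 / 2) / x - Real.exp (-s * y ^ 2 / 2) / y) := by
    ring
  rw [hEq]
  exact mul_pos (mul_pos hsinx (one_div_pos.2 hDx)) (sub_pos.2 hEdiv)
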